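/- Let Σ and N be Hermitian positive definite complex s×s matrices, Σ̃ = Σ + N, and Ñ = (√((I+Σ̃⁻¹)⁻¹) (N⁻¹ − Σ̃⁻¹) √((I+Σ̃⁻¹)⁻¹))⁻¹. Then det(I + (Ñ + I)⁻¹ Σ̃) = det(I + (N + I)⁻¹ Σ). -/

import Mathlib

open Matrix
open scoped ComplexOrder Classical

variable {n : Type*} [Fintype n] [DecidableEq n]

lemma commute_nonsing_inv {B C : Matrix n n ℂ} (hB : IsUnit B.det)
    (h : C * B = B * C) : C * B⁻¹ = B⁻¹ * C := by
  have h1 : B⁻¹ * (C * B) * B⁻¹ = B⁻¹ * (B * C) * B⁻¹ := by rw [h]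
  rw [← mul_assoc, mul_assoc (B⁻¹ * C) B B⁻¹, Matrix.mul_nonsing_inv _ hB, mul_one,
    ← mul_assoc, Matrix.nonsing_inv_mul _ hB, one_mul] at h1
  exact h1.symm

lemma posDef_conj {A B : Matrix n n ℂ} (hA : A.PosDef) (hB : IsUnit B.det) :
    (Bᴴ * A * B).PosDef := by
  refine PosDef.of_dotProduct_mulVec_pos (isHermitian_conjTranspose_mul_mul B hA.1) fun x hx => ?_
  have hBx : B *ᵥ x ≠ 0 := by
    intro hc
    exact hx (by simpa [hc] using
      ((Matrix.mulVec_injective_iff_isUnit.mpr ((isUnit_iff_isUnit_det B).mpr hB))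
        (a₁ := x) (a₂ := 0) (by simpa using hc)))
  simpa only [star_mulVec, dotProduct_mulVec, vecMul_vecMul] using hA.dotProduct_mulVec_pos hBx

noncomputable def Matrix.PosSemidef.sqrt {A : Matrix n n ℂ} (hA : A.PosSemidef) :
    Matrix n n ℂ :=
  (hA.1.eigenvectorUnitary : Matrix n n ℂ) *
    diagonal ((↑) ∘ (√·) ∘ hA.1.eigenvalues) * (star (hA.1.eigenvectorUnitary : Matrix n n ℂ))

lemma Matrix.PosSemidef.sqrt_mul_self {A : Matrix n n ℂ} (hA : A.PosSemidef) :
    hA.sqrt * hA.sqrt = A := by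
  have hUU' : star (hA.1.eigenvectorUnitary : Matrix n n ℂ) * hA.1.eigenvectorUnitary = 1 :=
    Matrix.mem_unitaryGroup_iff'.mp hA.1.eigenvectorUnitary.2
  conv_rhs => rw [hA.1.spectral_theorem, Unitary.conjStarAlgAut_apply]
  simp only [Matrix.PosSemidef.sqrt, mul_assoc]
  rw [← mul_assoc (star _) _, hUU', one_mul, ← mul_assoc (diagonal _) (diagonal _),
    diagonal_mul_diagonal]
  congr 3
  funext i
  simp only [Function.comp_apply]
  rw [← Complex.ofReal_mul, Real.mul_self_sqrt (hA.eigenvalues_nonneg i)]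
  rfl

lemma Matrix.PosSemidef.sqrt_isHermitian {A : Matrix n n ℂ} (hA : A.PosSemidef) :
    hA.sqrtᴴ = hA.sqrt := by
  simp only [Matrix.PosSemidef.sqrt, conjTranspose_mul, conjTranspose_conjTranspose,
    diagonal_conjTranspose, Matrix.star_eq_conjTranspose, mul_assoc]
  congr 3
  funext i
  simp

lemma commute_sqrt {A C : Matrix n n ℂ} (hA : A.PosSemidef)
    (h : C * A = A * C) : C * hA.sqrt = hA.sqrt * C := by
  set U : Matrix n n ℂ := (hA.1.eigenvectorUnitary : Matrix n n ℂ) with hU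
  have hUU : U * star U = 1 := Matrix.mem_unitaryGroup_iff.mp hA.1.eigenvectorUnitary.2
  have hUU' : star U * U = 1 := Matrix.mem_unitaryGroup_iff'.mp hA.1.eigenvectorUnitary.2
  set f : n → ℂ := RCLike.ofReal ∘ hA.1.eigenvalues with hf
  have hAU : A * U = U * diagonal f := by
    conv_lhs => rw [hA.1.spectral_theorem, Unitary.conjStarAlgAut_apply]
    rw [mul_assoc, hUU', mul_one]
  have hUA : star U * A = diagonal f * star U := by
    conv_lhs => rw [hA.1.spectral_theorem, Unitary.conjStarAlgAut_apply]
    rw [← mul_assoc, ← mul_assoc, hUU', one_mul]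
  set C' : Matrix n n ℂ := star U * C * U with hC'
  have hcomm : C' * diagonal f = diagonal f * C' := by
    calc C' * diagonal f = star U * C * (U * diagonal f) := by
          simp only [hC', mul_assoc]
      _ = star U * (C * A) * U := by rw [← hAU]; simp only [mul_assoc]
      _ = (star U * A) * (C * U) := by rw [h]; simp only [mul_assoc]
      _ = diagonal f * C' := by rw [hUA, hC']; simp only [mul_assoc]
  set g : n → ℂ := RCLike.ofReal ∘ Real.sqrt ∘ hA.1.eigenvalues with hg
  have hcomm2 : C' * diagonal g = diagonal g * C' := by
    ext i j
    rw [Matrix.mul_diagonal, Matrix.diagonal_mul]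
    by_cases hc : C' i j = 0
    · simp [hc]
    · have h1 : C' i j * f j = f i * C' i j := by
        have := congrFun (congrFun hcomm i) j
        simpa [Matrix.mul_diagonal, Matrix.diagonal_mul] using this
      have h2 : f j = f i := by
        rw [mul_comm (f i) _] at h1
        exact mul_left_cancel₀ hc h1
      have h3 : hA.1.eigenvalues j = hA.1.eigenvalues i := by
        have := h2
        simp only [hf, Function.comp_apply, RCLike.ofReal_inj] at this
        exact this
      rw [mul_comm]
      simp [hg, h3]
  have hsqrt : hA.sqrt = U * diagonal g * star U := rfl
  have hCU : C * U = U * C' := by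
    rw [hC', ← mul_assoc, ← mul_assoc, hUU, one_mul]
  have hC'U : C' * star U = star U * C := by
    rw [hC', mul_assoc, hUU, mul_one]
  calc C * hA.sqrt = (C * U) * diagonal g * star U := by rw [hsqrt]; simp only [mul_assoc]
    _ = U * (C' * diagonal g) * star U := by rw [hCU]; simp only [mul_assoc]
    _ = U * diagonal g * (C' * star U) := by rw [hcomm2]; simp only [mul_assoc]
    _ = hA.sqrt * C := by rw [hC'U, hsqrt]; simp only [mul_assoc]

/-- The (Hermitian positive semidefinite) square root of a positive semidefinite
complex matrix; junk value `0` if the matrix is not positive semidefinite.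
For a Hermitian positive definite matrix this is its unique Hermitian positive
definite square root. -/
noncomputable def msqrt {s : ℕ} (A : Matrix (Fin s) (Fin s) ℂ) :
    Matrix (Fin s) (Fin s) ℂ :=
  if h : A.PosSemidef then (h.1.eigenvectorUnitary : Matrix (Fin s) (Fin s) ℂ) *
    diagonal ((↑) ∘ (√·) ∘ h.1.eigenvalues) * (star (h.1.eigenvectorUnitary : Matrix (Fin s) (Fin s) ℂ))
  else 0

/-- Let `S` and `N` be Hermitian positive definite complex `s × s` matrices,
`Σ̃ = S + N` and `Ñ = (√((I+Σ̃⁻¹)⁻¹) (N⁻¹ − Σ̃⁻¹) √((I+Σ̃⁻¹)⁻¹))⁻¹`.  Then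
`det(I + (Ñ + I)⁻¹ Σ̃) = det(I + (N + I)⁻¹ S)`. -/
theorem stmt3 {s : ℕ} (S N : Matrix (Fin s) (Fin s) ℂ)
    (hS : S.PosDef) (hN : N.PosDef) :
    (1 + ((msqrt ((1 + (S + N)⁻¹)⁻¹) * (N⁻¹ - (S + N)⁻¹)
            * msqrt ((1 + (S + N)⁻¹)⁻¹))⁻¹ + 1)⁻¹ * (S + N)).det
      = (1 + (N + 1)⁻¹ * S).det := by
  set T := S + N with hTdef
  have hT : T.PosDef := hS.add hN
  have hNdet : IsUnit N.det := hN.det_pos.ne'.isUnit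
  have hTdet : IsUnit T.det := hT.det_pos.ne'.isUnit
  have hT1 : (1 + T⁻¹).PosDef := Matrix.PosDef.one.add hT.inv
  have hT1det : IsUnit (1 + T⁻¹).det := hT1.det_pos.ne'.isUnit
  have hK : ((1 + T⁻¹)⁻¹).PosDef := hT1.inv
  set K := (1 + T⁻¹)⁻¹ with hKdef
  set M := hK.posSemidef.sqrt with hMdef
  have hMeq : msqrt K = M := by
    simp only [msqrt]
    rw [dif_pos hK.posSemidef]
    rfl
  have hMM : M * M = K := hK.posSemidef.sqrt_mul_self
  have hMH : Mᴴ = M := hK.posSemidef.sqrt_isHermitian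
  have hKdet : IsUnit K.det := hK.det_pos.ne'.isUnit
  have hMdet : IsUnit M.det := by
    have h2 : M.det * M.det = K.det := by rw [← Matrix.det_mul, hMM]
    exact isUnit_of_mul_isUnit_left (h2 ▸ hKdet)
  -- D := N⁻¹ - T⁻¹ is positive definite
  have key1 : T * (N⁻¹ - T⁻¹) * T = S * N⁻¹ * S + S := by
    rw [mul_sub, sub_mul, Matrix.mul_nonsing_inv _ hTdet, one_mul, hTdef]
    simp only [add_mul, mul_add, Matrix.mul_nonsing_inv _ hNdet,
      Matrix.nonsing_inv_mul_cancel_right _ _ hNdet, one_mul]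
    abel
  have hSNS : (S * N⁻¹ * S + S).PosDef := by
    have h1 := posDef_conj hN.inv hS.det_pos.ne'.isUnit
    rw [hS.1.eq] at h1
    exact h1.add hS
  have hD : (N⁻¹ - T⁻¹).PosDef := by
    have h1 := posDef_conj hSNS hT.inv.det_pos.ne'.isUnit
    rw [hT.inv.isHermitian.eq, ← key1, mul_assoc T, Matrix.nonsing_inv_mul_cancel_left _ _ hTdet,
      Matrix.mul_nonsing_inv_cancel_right _ _ hTdet] at h1
    exact h1
  set D := N⁻¹ - T⁻¹ with hDdef
  have hA : (M * D * M).PosDef := by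
    have h1 := posDef_conj hD hMdet
    rwa [hMH] at h1
  set A := M * D * M with hAdef
  have hAdet : IsUnit A.det := hA.det_pos.ne'.isUnit
  have h1A : (1 + A).PosDef := Matrix.PosDef.one.add hA
  have h1Adet : IsUnit (1 + A).det := h1A.det_pos.ne'.isUnit
  have h1T : (1 + T).PosDef := Matrix.PosDef.one.add hT
  have h1Tdet : IsUnit (1 + T).det := h1T.det_pos.ne'.isUnit
  have hN1 : (N + 1).PosDef := hN.add Matrix.PosDef.one
  have hN1det : IsUnit (N + 1).det := hN1.det_pos.ne'.isUnit
  -- commutation facts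
  have hcomm1 : T * (1 + T⁻¹) = (1 + T⁻¹) * T := by
    rw [mul_add T 1 T⁻¹, add_mul 1 T⁻¹ T, mul_one, one_mul, Matrix.mul_nonsing_inv _ hTdet,
      Matrix.nonsing_inv_mul _ hTdet]
  have hcommTK : T * K = K * T := commute_nonsing_inv hT1det hcomm1
  have hcommTM : T * M = M * T := commute_sqrt hK.posSemidef hcommTK
  have hKT : (1 + T) * K = T := by
    have h2 : T * (1 + T⁻¹) = 1 + T := by
      rw [mul_add T 1 T⁻¹, mul_one, Matrix.mul_nonsing_inv _ hTdet, add_comm]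
    rw [hKdef, ← h2, mul_assoc, Matrix.mul_nonsing_inv _ hT1det, mul_one]
  have hcommT1T : T * (1 + T) = (1 + T) * T := by
    rw [mul_add T 1 T, add_mul 1 T T, mul_one, one_mul]
  have hKeq2 : K = T * (1 + T)⁻¹ := by
    have hKeq : K = (1 + T)⁻¹ * T := by
      conv_lhs => rw [← Matrix.nonsing_inv_mul_cancel_left (1 + T) K h1Tdet, hKT]
    rw [hKeq, commute_nonsing_inv h1Tdet hcommT1T]
  have hMTM : M * (1 + T) * M = T := by
    have hcM : M * (1 + T) = (1 + T) * M := by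
      rw [add_mul 1 T M, mul_add M 1 T, one_mul, mul_one, hcommTM]
    rw [hcM, mul_assoc, hMM, hKT]
  -- the two inverse rewrites
  have step1 : (A⁻¹ + 1)⁻¹ = (1 + A)⁻¹ * A := by
    have h2 : A⁻¹ + 1 = A⁻¹ * (1 + A) := by
      rw [mul_add A⁻¹ 1 A, mul_one, Matrix.nonsing_inv_mul _ hAdet]
    rw [h2, Matrix.mul_inv_rev, Matrix.nonsing_inv_nonsing_inv _ hAdet]
  have step2 : (1 : Matrix (Fin s) (Fin s) ℂ) + (1 + A)⁻¹ * A * T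
      = (1 + A)⁻¹ * (1 + A * (1 + T)) := by
    rw [mul_add A 1 T, mul_one, ← add_assoc, mul_add (1 + A)⁻¹ (1 + A) (A * T),
      Matrix.nonsing_inv_mul _ h1Adet, ← mul_assoc (1 + A)⁻¹ A T]
  -- determinant of 1 + A * (1 + T)
  have det1 : ((1 : Matrix (Fin s) (Fin s) ℂ) + A * (1 + T)).det = N.det⁻¹ * T.det := by
    have e0 : A * (1 + T) = M * (D * M * (1 + T)) := by
      rw [hAdef]; simp only [mul_assoc]
    rw [e0, Matrix.det_one_add_mul_comm, mul_assoc D M (1 + T), mul_assoc D (M * (1 + T)) M, hMTM]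
    have h2 : (1 : Matrix (Fin s) (Fin s) ℂ) + D * T = N⁻¹ * T := by
      rw [hDdef, sub_mul N⁻¹ T⁻¹ T, Matrix.nonsing_inv_mul _ hTdet]
      abel
    rw [h2, Matrix.det_mul, Matrix.det_nonsing_inv, Ring.inverse_eq_inv']
  -- determinant of 1 + A
  have det2 : ((1 : Matrix (Fin s) (Fin s) ℂ) + A).det
      = N.det⁻¹ * (N + 1).det * T.det * ((1 + T).det)⁻¹ := by
    rw [hAdef, mul_assoc M D M, Matrix.det_one_add_mul_comm, mul_assoc D M M, hMM, hKeq2,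
      ← mul_assoc D T (1 + T)⁻¹]
    have h2 : (1 : Matrix (Fin s) (Fin s) ℂ) + D * T * (1 + T)⁻¹
        = (N⁻¹ * (N + 1) * T) * (1 + T)⁻¹ := by
      have e1 : N⁻¹ * (N + 1) * T = (1 + T) + D * T := by
        rw [mul_add N⁻¹ N 1, Matrix.nonsing_inv_mul _ hNdet, mul_one, add_mul 1 N⁻¹ T,
          one_mul, hDdef, sub_mul N⁻¹ T⁻¹ T, Matrix.nonsing_inv_mul _ hTdet]
        abel
      rw [e1, add_mul (1 + T) (D * T) (1 + T)⁻¹, Matrix.mul_nonsing_inv _ h1Tdet]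
    rw [h2]
    simp only [Matrix.det_mul, Matrix.det_nonsing_inv, Ring.inverse_eq_inv']
  -- right-hand side
  have detR : ((1 : Matrix (Fin s) (Fin s) ℂ) + (N + 1)⁻¹ * S).det
      = ((N + 1).det)⁻¹ * (1 + T).det := by
    have h2 : (1 : Matrix (Fin s) (Fin s) ℂ) + (N + 1)⁻¹ * S = (N + 1)⁻¹ * (1 + T) := by
      have e1 : (1 : Matrix (Fin s) (Fin s) ℂ) + T = (N + 1) + S := by rw [hTdef]; abel
      rw [e1, mul_add (N + 1)⁻¹ (N + 1) S, Matrix.nonsing_inv_mul _ hN1det]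
    rw [h2, Matrix.det_mul, Matrix.det_nonsing_inv, Ring.inverse_eq_inv']
  -- put it together
  rw [hMeq, ← hAdef, step1, step2, Matrix.det_mul, det1, Matrix.det_nonsing_inv,
    Ring.inverse_eq_inv', det2, detR]
  have e1 : N.det ≠ 0 := hN.det_pos.ne'
  have e2 : T.det ≠ 0 := hT.det_pos.ne'
  have e3 : (N + 1).det ≠ 0 := hN1.det_pos.ne'
  have e4 : (1 + T).det ≠ 0 := h1T.det_pos.ne'
  field_simp
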